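/- For all natural numbers n ≥ 1 and real m ≥ 1, the following explicit two-sided bound holds: (1 + n/m)^{n+m} · (1 + 1/m)^{−(m+1)} · e^{1−n} ≤ ∏_{l=1}^{n} (1 + l/m) ≤ (1 + n/m)^{n+m+1} · (1 + 1/m)^{−(m+1)} · e^{1−n}. -/
import Mathlib


open Finset

/-- Explicit two-sided bound for `∏_{l=1}^n (1 + l/m)`, obtained by comparing
`∑_{l=1}^n ln(1 + l/m)` with `∫_1^n ln(1 + x/m) dx`:
`(1+n/m)^{n+m}·(1+1/m)^{-(m+1)}·e^{1-n} ≤ ∏_{l=1}^n (1+l/m)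
  ≤ (1+n/m)^{n+m+1}·(1+1/m)^{-(m+1)}·e^{1-n}`. -/
theorem prod_one_add_div_bounds
    (n : ℕ) (hn : 1 ≤ n) (m : ℝ) (hm : 1 ≤ m) :
    (1 + (n : ℝ) / m) ^ ((n : ℝ) + m) * (1 + 1 / m) ^ (-(m + 1)) *
        Real.exp (1 - (n : ℝ)) ≤ ∏ l ∈ Icc 1 n, (1 + (l : ℝ) / m) ∧
    ∏ l ∈ Icc 1 n, (1 + (l : ℝ) / m) ≤
      (1 + (n : ℝ) / m) ^ ((n : ℝ) + m + 1) * (1 + 1 / m) ^ (-(m + 1)) *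
        Real.exp (1 - (n : ℝ)) := by
  have hm0 : (0:ℝ) < m := lt_of_lt_of_le one_pos hm
  set g : ℝ → ℝ := fun x => Real.log (1 + x / m) with hg
  -- monotone
  have hmono : ∀ a : ℕ, MonotoneOn g (Set.Icc (1:ℝ) (1 + a)) := by
    intro a x hx y hy hxy
    exact Real.log_le_log (by have := hx.1; positivity)
      (by gcongr)
  -- integral
  have hint : ∀ a : ℕ, ∫ x in (1:ℝ)..(1 + a), g x
      = (m + (1 + a)) * g (1 + a) - (1 + a) - ((m + 1) * g 1 - 1) := by
    intro a
    have key : ∀ x ∈ Set.uIcc (1:ℝ) (1 + a), HasDerivAt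
        (fun x => (m + x) * Real.log (1 + x / m) - x) (g x) x := by
      intro x hx
      have hx1 : (1:ℝ) ≤ x := by
        rcases Set.mem_uIcc.1 hx with h | h
        · exact h.1
        · linarith [h.1, Nat.cast_nonneg (α := ℝ) a]
      have hpos : 0 < 1 + x / m := by positivity
      have h1 : HasDerivAt (fun x : ℝ => 1 + x / m) (1 / m) x := by
        simpa using ((hasDerivAt_id x).div_const m).const_add 1
      have h2 : HasDerivAt (fun x : ℝ => Real.log (1 + x / m)) ((1/m) / (1 + x/m)) x :=
        h1.log hpos.ne'
      have h3 : HasDerivAt (fun x : ℝ => (m + x) * Real.log (1 + x / m) - x)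
          (1 * Real.log (1 + x / m) + (m + x) * ((1/m) / (1 + x/m)) - 1) x :=
        (((hasDerivAt_id x).const_add m).mul h2).sub (hasDerivAt_id x)
      convert h3 using 1
      have : (m + x) * ((1/m) / (1 + x/m)) = 1 := by
        field_simp
      rw [this]; simp [hg]
    have hInt : IntervalIntegrable g MeasureTheory.volume 1 (1 + a) := by
      apply ContinuousOn.intervalIntegrable
      apply ContinuousOn.log
      · fun_prop
      · intro x hx
        have hx1 : (1:ℝ) ≤ x := by
          rcases Set.mem_uIcc.1 hx with h | h
          · exact h.1
          · linarith [h.1, Nat.cast_nonneg (α := ℝ) a]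
        positivity
    rw [intervalIntegral.integral_eq_sub_of_hasDerivAt key hInt]
  -- sum rewriting
  obtain ⟨k, rfl⟩ : ∃ k, n = k + 1 := ⟨n - 1, (Nat.succ_pred_eq_of_pos hn).symm⟩
  have hsum : ∑ l ∈ Icc 1 (k+1), Real.log (1 + (l:ℝ) / m)
      = ∑ i ∈ Finset.range (k+1), g (1 + (i:ℝ)) := by
    rw [← Finset.Ico_add_one_right_eq_Icc, Finset.sum_Ico_eq_sum_range]
    simp only [Nat.succ_sub_one, hg]
    refine Finset.sum_congr rfl fun i _ => by push_cast; ring_nf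
  have hlow : ∫ x in (1:ℝ)..(1 + k), g x ≤ ∑ i ∈ Finset.range (k+1), g (1 + (i:ℝ)) := by
    calc ∫ x in (1:ℝ)..(1 + k), g x ≤ ∑ i ∈ Finset.range k, g (1 + ((i:ℝ) + 1)) := by
          have := (hmono k).integral_le_sum
          simpa using this
      _ ≤ ∑ i ∈ Finset.range (k+1), g (1 + (i:ℝ)) := by
          rw [Finset.sum_range_succ' (fun i => g (1 + (i:ℝ)))]
          have hg1 : 0 ≤ g 1 := by
            simp only [hg]
            apply Real.log_nonneg
            have : 0 ≤ 1/m := by positivity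
            linarith
          push_cast
          refine le_add_of_le_of_nonneg (le_of_eq ?_) (by simpa using hg1)
          refine Finset.sum_congr rfl fun i _ => by ring_nf
  have hup : ∑ i ∈ Finset.range (k+1), g (1 + (i:ℝ))
      ≤ (∫ x in (1:ℝ)..(1 + k), g x) + g (1 + k) := by
    rw [Finset.sum_range_succ]
    have := (hmono k).sum_le_integral
    push_cast at this ⊢
    linarith
  have hP : ∏ l ∈ Icc 1 (k+1), (1 + (l:ℝ) / m)
      = Real.exp (∑ l ∈ Icc 1 (k+1), Real.log (1 + (l:ℝ) / m)) := by
    rw [Real.exp_sum]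
    exact Finset.prod_congr rfl fun l _ => (Real.exp_log (by positivity)).symm
  have ha : (0:ℝ) < 1 + (↑(k+1):ℝ) / m := by positivity
  have hb : (0:ℝ) < 1 + 1 / m := by positivity
  have hintk := hint k
  constructor
  · rw [Real.rpow_def_of_pos ha, Real.rpow_def_of_pos hb, ← Real.exp_add, ← Real.exp_add,
      hP, Real.exp_le_exp, hsum]
    refine le_trans (le_of_eq ?_) hlow
    rw [hintk]
    simp only [hg]
    push_cast
    ring
  · rw [Real.rpow_def_of_pos ha, Real.rpow_def_of_pos hb, ← Real.exp_add, ← Real.exp_add,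
      hP, Real.exp_le_exp, hsum]
    refine le_trans hup (le_of_eq ?_)
    rw [hintk]
    simp only [hg]
    push_cast
    ring
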